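/- Let 0 < r₀ < r₁ and let (A, w) be an EYM solution on (r₀, r₁). If A(r) → +∞ as r → r₀⁺, then lim sup_{r → r₀⁺} w'(r)² = +∞. -/

import Mathlib

open Filter Topology Set

/-- The quantity Φ(r) = 1 − A(r) − (1 − w(r)²)²/r² − Λ·r². -/
noncomputable def Phi (Λ : ℝ) (A w : ℝ → ℝ) (r : ℝ) : ℝ :=
  1 - A r - (1 - (w r) ^ 2) ^ 2 / r ^ 2 - Λ * r ^ 2

/-- `(A, w)` is a static spherically symmetric Einstein SU(2)-Yang–Mills
solution with cosmological constant `Λ` on the set `I`. -/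
def IsEYM (Λ : ℝ) (A w : ℝ → ℝ) (I : Set ℝ) : Prop :=
  (∀ r ∈ I, DifferentiableAt ℝ A r) ∧
  (∀ r ∈ I, DifferentiableAt ℝ w r) ∧
  (∀ r ∈ I, DifferentiableAt ℝ (deriv w) r) ∧
  (∀ r ∈ I, r * deriv A r + 2 * A r * (deriv w r) ^ 2 = Phi Λ A w r) ∧
  (∀ r ∈ I, r ^ 2 * A r * deriv (deriv w) r + r * Phi Λ A w r * deriv w r
      + w r * (1 - (w r) ^ 2) = 0)

set_option maxHeartbeats 1600000 in
/-- if `A → +∞` as `r → r₀⁺`, then `limsup_{r→r₀⁺} w'(r)² = +∞`. -/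
theorem stmt_7 (Λ r₀ r₁ : ℝ) (A w : ℝ → ℝ)
    (hr₀ : 0 < r₀) (hr₁ : r₀ < r₁)
    (hEYM : IsEYM Λ A w (Ioo r₀ r₁))
    (hA : Filter.Tendsto A (𝓝[>] r₀) atTop) :
    Filter.limsup (fun r => (((deriv w r) ^ 2 : ℝ) : EReal)) (𝓝[>] r₀) = ⊤ := by
  by_contra h
  obtain ⟨hA', hw', hw'', heq1, _⟩ := hEYM
  have hlt : Filter.limsup (fun r => (((deriv w r) ^ 2 : ℝ) : EReal)) (𝓝[>] r₀) < ⊤ :=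
    Ne.lt_top h
  obtain ⟨c, hc1, hc2⟩ := exists_between hlt
  have hev0 : ∀ᶠ r in 𝓝[>] r₀, (((deriv w r) ^ 2 : ℝ) : EReal) < c :=
    Filter.eventually_lt_of_limsup_lt hc1
  set M : ℝ := max c.toReal 0 with hMdef
  have hM0 : 0 ≤ M := le_max_right _ _
  have hMle : c.toReal ≤ M := le_max_left _ _
  clear_value M
  have hevM : ∀ᶠ r in 𝓝[>] r₀, (deriv w r) ^ 2 ≤ M := by
    filter_upwards [hev0] with r hr
    have hb : c ≠ ⊥ := by
      intro hc
      rw [hc] at hr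
      exact (not_lt_bot hr)
    have : (((deriv w r) ^ 2 : ℝ) : EReal) < ((c.toReal : ℝ) : EReal) := by
      rwa [EReal.coe_toReal hc2.ne hb]
    exact (EReal.coe_lt_coe_iff.mp this).le.trans hMle
  have hevA : ∀ᶠ r in 𝓝[>] r₀, 0 ≤ A r := hA.eventually_ge_atTop 0
  have hevI : ∀ᶠ r in 𝓝[>] r₀, r ∈ Ioo r₀ r₁ :=
    Ioo_mem_nhdsGT_of_mem ⟨le_refl r₀, hr₁⟩
  obtain ⟨s₀, hs₀, hsub⟩ := mem_nhdsGT_iff_exists_Ioo_subset.mp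
    (hevM.and (hevA.and hevI) : ∀ᶠ r in 𝓝[>] r₀, _)
  -- working interval
  set s₁ : ℝ := min s₀ r₁ with hs₁def
  have hs₁ : r₀ < s₁ := lt_min hs₀ hr₁
  have hJ : ∀ r ∈ Ioo r₀ s₁, (deriv w r) ^ 2 ≤ M ∧ 0 ≤ A r ∧ r ∈ Ioo r₀ r₁ := by
    intro r hr
    exact hsub ⟨hr.1, lt_of_lt_of_le hr.2 (min_le_left _ _)⟩
  set m : ℝ := (r₀ + s₁) / 2 with hmdef
  have hm : m ∈ Ioo r₀ s₁ := ⟨by simp only [hmdef]; linarith, by simp only [hmdef]; linarith⟩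
  have hmr₁ : m < r₁ := lt_of_lt_of_le hm.2 (min_le_right _ _)
  clear_value s₁
  clear_value m
  -- bound on w on the interval
  have hwd : ∀ x ∈ Ioo r₀ s₁, HasDerivWithinAt w (deriv w x) (Ioo r₀ s₁) x := by
    intro x hx
    exact ((hw' x (hJ x hx).2.2).hasDerivAt).hasDerivWithinAt
  have hdb : ∀ x ∈ Ioo r₀ s₁, ‖deriv w x‖ ≤ Real.sqrt M := by
    intro x hx
    rw [Real.norm_eq_abs, ← Real.sqrt_sq_eq_abs]
    exact Real.sqrt_le_sqrt (hJ x hx).1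
  set W : ℝ := |w m| + Real.sqrt M * (r₁ - r₀) with hWdef
  have hwb : ∀ r ∈ Ioo r₀ s₁, |w r| ≤ W := by
    intro r hr
    have h1 : ‖w r - w m‖ ≤ Real.sqrt M * ‖r - m‖ :=
      (convex_Ioo r₀ s₁).norm_image_sub_le_of_norm_hasDerivWithin_le hwd hdb hm hr
    have h2 : ‖r - m‖ ≤ r₁ - r₀ := by
      rw [Real.norm_eq_abs, abs_sub_le_iff]
      have := (hJ r hr).2.2
      have := (hJ m hm).2.2
      constructor <;> [skip; skip] <;>
        · simp only [Set.mem_Ioo] at *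
          linarith [hr.1, hr.2, hm.1, hm.2]
    have h3 : Real.sqrt M * ‖r - m‖ ≤ Real.sqrt M * (r₁ - r₀) :=
      mul_le_mul_of_nonneg_left h2 (Real.sqrt_nonneg M)
    calc |w r| = |w m + (w r - w m)| := by ring_nf
      _ ≤ |w m| + |w r - w m| := abs_add_le _ _
      _ ≤ |w m| + Real.sqrt M * (r₁ - r₀) := by
          have := h1.trans h3
          rw [Real.norm_eq_abs] at this
          linarith
  -- constants
  clear_value W
  set C₁ : ℝ := (1 + W ^ 2) ^ 2 / r₀ ^ 2 with hC₁def
  have hC₁0 : 0 ≤ C₁ := by positivity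
  have hC₁W : (1 + W ^ 2) ^ 2 / r₀ ^ 2 = C₁ := rfl
  clear_value C₁
  set L : ℝ := |Λ| * r₁ ^ 2 with hLdef
  have hL0 : 0 ≤ L := by positivity
  have hLeq : |Λ| * r₁ ^ 2 = L := rfl
  clear_value L
  set K : ℝ := (1 + 2 * M + C₁ + L) / r₀ with hKdef
  have hK0 : 0 ≤ K := by
    rw [hKdef]
    apply div_nonneg _ hr₀.le
    linarith
  have hrK : r₀ * K = 1 + 2 * M + C₁ + L := by
    rw [hKdef]; field_simp
  clear_value K
  -- key differential inequality
  have key : ∀ r ∈ Ioo r₀ s₁, -K * (A r + 1) ≤ deriv A r := by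
    intro r hr
    obtain ⟨hM', hA0, hrI⟩ := hJ r hr
    have hrpos : 0 < r := hr₀.trans hrI.1
    have heq := heq1 r hrI
    rw [Phi] at heq
    -- bound (1 - w^2)^2 / r^2 ≤ C₁
    have hw2 : (w r) ^ 2 ≤ W ^ 2 := by
      have := hwb r hr
      nlinarith [abs_nonneg (w r), sq_abs (w r)]
    have hnum : (1 - (w r) ^ 2) ^ 2 ≤ (1 + W ^ 2) ^ 2 := by
      nlinarith [sq_nonneg (w r), sq_nonneg W]
    have hfrac : (1 - (w r) ^ 2) ^ 2 / r ^ 2 ≤ C₁ := by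
      rw [← hC₁W]
      have h1 : (1 - (w r) ^ 2) ^ 2 / r ^ 2 ≤ (1 - (w r) ^ 2) ^ 2 / r₀ ^ 2 := by
        apply div_le_div_of_nonneg_left (by positivity) (by positivity)
        exact pow_le_pow_left₀ hr₀.le hrI.1.le 2
      have h2 : (1 - (w r) ^ 2) ^ 2 / r₀ ^ 2 ≤ (1 + W ^ 2) ^ 2 / r₀ ^ 2 := by
        apply div_le_div_of_nonneg_right hnum (by positivity)
      linarith
    have hLam' : Λ * r ^ 2 ≤ L := by
      have h1 : |Λ * r ^ 2| ≤ L := by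
        rw [← hLeq, abs_mul]
        apply mul_le_mul_of_nonneg_left _ (abs_nonneg Λ)
        rw [abs_of_nonneg (by positivity : (0:ℝ) ≤ r ^ 2)]
        exact pow_le_pow_left₀ hrpos.le hrI.2.le 2
      linarith [le_abs_self (Λ * r ^ 2)]
    have hwp : 2 * A r * (deriv w r) ^ 2 ≤ 2 * M * A r := by
      nlinarith [sq_nonneg (deriv w r)]
    -- r * deriv A r ≥ -(A r + 1) * (r₀ * K)
    have hstep : -(A r + 1) * (r₀ * K) ≤ r * deriv A r := by
      rw [hrK]
      nlinarith [hfrac, hLam', hwp, hA0, hM0, hC₁0, hL0,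
        mul_nonneg hC₁0 hA0, mul_nonneg hL0 hA0, mul_nonneg hM0 hA0]
    -- conclude
    have hX : 0 ≤ r * (deriv A r + K * (A r + 1)) := by
      have h1 : 0 ≤ (r - r₀) * (K * (A r + 1)) := by
        apply mul_nonneg (by linarith [hrI.1]) (mul_nonneg hK0 (by linarith))
      nlinarith [hstep, h1]
    have := (mul_nonneg_iff_of_pos_left hrpos).mp hX
    linarith
  -- monotonicity of g
  set g : ℝ → ℝ := fun r => (A r + 1) * Real.exp (K * r) with hgdef
  have hgd : ∀ x ∈ Ioo r₀ s₁,
      HasDerivAt g ((deriv A x + K * (A x + 1)) * Real.exp (K * x)) x := by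
    intro x hx
    have h1 : HasDerivAt (fun y => A y + 1) (deriv A x) x :=
      ((hA' x (hJ x hx).2.2).hasDerivAt).add_const 1
    have h2 : HasDerivAt (fun y : ℝ => K * y) (K * 1) x :=
      (hasDerivAt_id x).const_mul K
    have h3 : HasDerivAt (fun y : ℝ => Real.exp (K * y)) (Real.exp (K * x) * (K * 1)) x :=
      h2.exp
    have h4 := h1.mul h3
    exact h4.congr_deriv (by ring)
  have hgm : MonotoneOn g (Ioo r₀ s₁) := by
    apply monotoneOn_of_deriv_nonneg (convex_Ioo r₀ s₁)
    · intro x hx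
      exact ((hgd x hx).differentiableAt).continuousAt.continuousWithinAt
    · rw [interior_Ioo]
      intro x hx
      exact ((hgd x hx).differentiableAt).differentiableWithinAt
    · rw [interior_Ioo]
      intro x hx
      rw [(hgd x hx).deriv]
      apply mul_nonneg _ (Real.exp_pos _).le
      have := key x hx
      linarith
  -- derive a bound on A on (r₀, m)
  set B : ℝ := g m / Real.exp (K * r₀) with hBdef
  have hbound : ∀ r ∈ Ioo r₀ m, A r ≤ B := by
    intro r hr
    have hrJ : r ∈ Ioo r₀ s₁ := ⟨hr.1, hr.2.trans hm.2⟩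
    have h1 : g r ≤ g m := hgm hrJ hm hr.2.le
    have h2 : Real.exp (K * r₀) ≤ Real.exp (K * r) :=
      Real.exp_le_exp.mpr (mul_le_mul_of_nonneg_left hr.1.le hK0)
    have hA0 : 0 ≤ A r := (hJ r hrJ).2.1
    have h3 : (A r + 1) * Real.exp (K * r₀) ≤ g m := by
      calc (A r + 1) * Real.exp (K * r₀) ≤ (A r + 1) * Real.exp (K * r) :=
            mul_le_mul_of_nonneg_left h2 (by linarith)
        _ = g r := rfl
        _ ≤ g m := h1
    have h4 : A r + 1 ≤ B := by
      rw [hBdef, le_div_iff₀ (Real.exp_pos _)]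
      exact h3
    linarith
  -- contradiction with A → ∞
  have hevB : ∀ᶠ r in 𝓝[>] r₀, B < A r := hA.eventually_gt_atTop B
  have hevm : ∀ᶠ r in 𝓝[>] r₀, r ∈ Ioo r₀ m :=
    Ioo_mem_nhdsGT_of_mem ⟨le_refl r₀, hm.1⟩
  obtain ⟨r, hr1, hr2⟩ := (hevB.and hevm).exists
  exact absurd (hbound r hr2) (not_le.mpr hr1)
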